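/- arXiv:0911.3110 — 2 statements merged into one kernel-verified Lean document; each statement's English description precedes it below -/
import Mathlib

section
/- Let f ∈ ℂ⟦x⟧ have zero constant coefficient, let n ≥ 1, and let g₀ ∈ ℂ⟦x⟧ have constant coefficient 1 with g₀ ≡ exp(f) (mod x^n). Then there exists h ∈ ℂ⟦x⟧ with h ≡ 0 (mod x^n) such that δ(g₀) ≡ g₀ · (δ(f) + δ(h)) (mod x^{2n}). -/
open PowerSeries

/-- `exp(f)`: substitution of `f` (with nilpotent, i.e. zero, constant coefficient)
into the exponential series `Σ_{n≥0} xⁿ/n!`.  Since the constant coefficient of `f`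
vanishes, the coefficient of degree `d` only receives contributions from `f^n` with
`n ≤ d`, so the following finite sum computes it. -/
noncomputable def expPS (f : PowerSeries ℂ) : PowerSeries ℂ :=
  PowerSeries.mk fun d => ∑ n ∈ Finset.range (d + 1),
    PowerSeries.coeff d (f ^ n) / (n.factorial : ℂ)

/-- The operator `δh = x · h′`, where `h′` is the formal derivative. -/
noncomputable def delta (h : PowerSeries ℂ) : PowerSeries ℂ :=
  PowerSeries.X * h.derivativeFun

/-- `a ≡ b (mod x^N)`: the coefficients of `a` and `b` agree in every degree `< N`. -/
def modX (N : ℕ) (a b : PowerSeries ℂ) : Prop :=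
  ∀ i < N, PowerSeries.coeff i a = PowerSeries.coeff i b

/-- The `k`-th block (of size `m`) of a power series: the polynomial (as a power
series) of degree `< m` whose coefficient of `x^j` is the coefficient of `x^{km+j}`. -/
noncomputable def blk (m k : ℕ) (h : PowerSeries ℂ) : PowerSeries ℂ :=
  PowerSeries.mk fun j => if j < m then PowerSeries.coeff (k * m + j) h else 0

lemma coeff_pow_eq_zero' {f : PowerSeries ℂ} (hf : PowerSeries.constantCoeff f = 0)
    {m n : ℕ} (h : m < n) : PowerSeries.coeff m (f ^ n) = 0 := by
  have hx : (PowerSeries.X : PowerSeries ℂ) ^ n ∣ f ^ n :=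
    pow_dvd_pow_of_dvd (PowerSeries.X_dvd_iff.mpr hf) n
  exact (PowerSeries.X_pow_dvd_iff.mp hx) m h

lemma coeff_derivativeFun' (g : PowerSeries ℂ) (n : ℕ) :
    PowerSeries.coeff n g.derivativeFun = PowerSeries.coeff (n + 1) g * (n + 1) :=
  PowerSeries.coeff_derivative g n

lemma coeff_delta' (g : PowerSeries ℂ) (i : ℕ) :
    PowerSeries.coeff i (delta g) = (i : ℂ) * PowerSeries.coeff i g := by
  cases i with
  | zero => simp [delta, PowerSeries.coeff_zero_X_mul]
  | succ m =>
    rw [delta, PowerSeries.coeff_succ_X_mul, coeff_derivativeFun']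
    push_cast
    ring

lemma derivPow (f : PowerSeries ℂ) : ∀ m : ℕ,
    PowerSeries.derivativeFun (f ^ (m+1)) = (m+1 : ℕ) • (f ^ m * f.derivativeFun)
  | 0 => by simp
  | m+1 => by
    have : f ^ (m+2) = f ^ (m+1) * f := by ring
    rw [this, PowerSeries.derivativeFun_mul, derivPow f m]
    simp only [smul_eq_mul, nsmul_eq_mul]
    push_cast
    ring

lemma expDeriv (f : PowerSeries ℂ) (hf : PowerSeries.constantCoeff f = 0) :
    PowerSeries.derivativeFun (expPS f) = expPS f * PowerSeries.derivativeFun f := by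
  ext d
  rw [coeff_derivativeFun']
  have hL : PowerSeries.coeff (d+1) (expPS f) * (d+1)
      = ∑ n ∈ Finset.range (d+1),
          PowerSeries.coeff d (f ^ n * f.derivativeFun) / (n.factorial : ℂ) := by
    rw [expPS, PowerSeries.coeff_mk, Finset.sum_mul, Finset.sum_range_succ']
    simp only [pow_zero, PowerSeries.coeff_one]
    have h0 : (if d + 1 = 0 then (1:ℂ) else 0) / (Nat.factorial 0 : ℂ) * ((d:ℂ)+1) = 0 := by
      simp
    rw [h0, add_zero]
    apply Finset.sum_congr rfl
    intro m _
    have hd : PowerSeries.coeff (d+1) (f ^ (m+1)) * ((d:ℂ)+1)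
        = PowerSeries.coeff d (PowerSeries.derivativeFun (f ^ (m+1))) := by
      rw [coeff_derivativeFun']
    rw [div_mul_eq_mul_div, hd, derivPow f m, map_nsmul]
    have hm1 : ((m+1 : ℕ) : ℂ) ≠ 0 := by exact_mod_cast Nat.succ_ne_zero m
    rw [nsmul_eq_mul, Nat.factorial_succ, Nat.cast_mul]
    exact mul_div_mul_left _ _ hm1
  rw [hL, PowerSeries.coeff_mul]
  have hstep : ∀ p ∈ Finset.HasAntidiagonal.antidiagonal d,
      PowerSeries.coeff p.1 (expPS f) * PowerSeries.coeff p.2 f.derivativeFun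
        = ∑ n ∈ Finset.range (d+1),
            PowerSeries.coeff p.1 (f ^ n) / (n.factorial : ℂ)
              * PowerSeries.coeff p.2 f.derivativeFun := by
    intro p hp
    have hp1 : p.1 ≤ d := by
      have := Finset.HasAntidiagonal.antidiagonal.fst_le hp
      exact this
    have hext : ∑ n ∈ Finset.range (p.1+1), PowerSeries.coeff p.1 (f ^ n) / (n.factorial : ℂ)
        = ∑ n ∈ Finset.range (d+1), PowerSeries.coeff p.1 (f ^ n) / (n.factorial : ℂ) := by
      apply Finset.sum_subset (Finset.range_subset_range.mpr (by omega))
      intro n _ hn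
      have : p.1 < n := by simpa using hn
      rw [coeff_pow_eq_zero' hf this, zero_div]
    rw [expPS, PowerSeries.coeff_mk, hext, Finset.sum_mul]
  rw [Finset.sum_congr rfl hstep, Finset.sum_comm]
  apply Finset.sum_congr rfl
  intro n _
  rw [PowerSeries.coeff_mul, Finset.sum_div]
  apply Finset.sum_congr rfl
  intro p _
  ring

lemma modX_mul_right {n : ℕ} {a b : PowerSeries ℂ} (c : PowerSeries ℂ) (h : modX n a b) :
    modX n (a * c) (b * c) := by
  intro i hi
  rw [PowerSeries.coeff_mul, PowerSeries.coeff_mul]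
  apply Finset.sum_congr rfl
  intro p hp
  have hp1 : p.1 ≤ i := Finset.HasAntidiagonal.antidiagonal.fst_le hp
  rw [h p.1 (lt_of_le_of_lt hp1 hi)]

/-- If `f` has zero constant coefficient, `n ≥ 1`, and `g₀` has constant coefficient
`1` with `g₀ ≡ exp(f) (mod x^n)`, then there exists `h ≡ 0 (mod x^n)` with
`δ(g₀) ≡ g₀ · (δ(f) + δ(h)) (mod x^{2n})`. -/
theorem exists_newton_error (f g₀ : PowerSeries ℂ) (n : ℕ)
    (hf : PowerSeries.constantCoeff f = 0) (hn : 1 ≤ n)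
    (hg₀ : PowerSeries.constantCoeff g₀ = 1)
    (happrox : modX n g₀ (expPS f)) :
    ∃ h : PowerSeries ℂ, modX n h 0 ∧
      modX (2 * n) (delta g₀) (g₀ * (delta f + delta h)) := by
  have hg₀ne : PowerSeries.constantCoeff g₀ ≠ 0 := by rw [hg₀]; exact one_ne_zero
  set w : PowerSeries ℂ := delta g₀ * g₀⁻¹ - delta f with hw
  -- coeff 0 of delta is always 0
  have hdelta0 : ∀ g : PowerSeries ℂ, PowerSeries.coeff 0 (delta g) = 0 := by
    intro g; rw [coeff_delta']; simp
  have hw0 : PowerSeries.coeff 0 w = 0 := by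
    rw [hw, map_sub, hdelta0, PowerSeries.coeff_mul]
    simp [hdelta0]
  -- key congruence: delta g₀ ≡ g₀ * delta f (mod x^n)
  have hkey : modX n (delta g₀) (g₀ * delta f) := by
    intro i hi
    have hE : PowerSeries.coeff i (delta g₀) = PowerSeries.coeff i (delta (expPS f)) := by
      rw [coeff_delta', coeff_delta', happrox i hi]
    have hEd : delta (expPS f) = expPS f * delta f := by
      rw [delta, expDeriv f hf, delta]; ring
    have hmul : PowerSeries.coeff i (expPS f * delta f)
        = PowerSeries.coeff i (g₀ * delta f) := by
      have := modX_mul_right (n := n) (delta f) happrox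
      exact (this i hi).symm
    rw [hE, hEd, hmul]
  -- w vanishes mod x^n
  have hwmod : ∀ i < n, PowerSeries.coeff i w = 0 := by
    intro i hi
    have h1 : PowerSeries.coeff i (delta g₀ * g₀⁻¹)
        = PowerSeries.coeff i (g₀ * delta f * g₀⁻¹) :=
      modX_mul_right g₀⁻¹ hkey i hi
    have h2 : g₀ * delta f * g₀⁻¹ = delta f := by
      have hinv : g₀ * g₀⁻¹ = 1 := PowerSeries.mul_inv_cancel g₀ hg₀ne
      calc g₀ * delta f * g₀⁻¹ = delta f * (g₀ * g₀⁻¹) := by ring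
      _ = delta f := by rw [hinv, mul_one]
    rw [hw, map_sub, h1, h2, sub_self]
  refine ⟨PowerSeries.mk fun k => PowerSeries.coeff k w / (k : ℂ), ?_, ?_⟩
  · intro i hi
    rw [PowerSeries.coeff_mk, hwmod i hi, zero_div, map_zero]
  · have hdh : delta (PowerSeries.mk fun k => PowerSeries.coeff k w / (k : ℂ)) = w := by
      ext i
      rw [coeff_delta', PowerSeries.coeff_mk]
      cases i with
      | zero => simp [hw0]
      | succ m =>
        have : ((m+1 : ℕ) : ℂ) ≠ 0 := by exact_mod_cast Nat.succ_ne_zero m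
        rw [mul_comm, div_mul_cancel₀ _ this]
    rw [hdh]
    have : g₀ * (delta f + w) = delta g₀ := by
      rw [hw]
      have hinv : g₀ * g₀⁻¹ = 1 := PowerSeries.mul_inv_cancel g₀ hg₀ne
      calc g₀ * (delta f + (delta g₀ * g₀⁻¹ - delta f)) = (g₀ * g₀⁻¹) * delta g₀ := by ring
      _ = delta g₀ := by rw [hinv, one_mul]
    rw [this]
    intro i _
    rfl
end

section
/- (Correctness of one iteration of the division loop.) Let f ∈ ℂ⟦x⟧ have zero constant coefficient, let g = exp(f) and u = exp(−f), and let s ≥ 1 and m ≥ 1. Let g₀ be the polynomial of degree < sm whose coefficients agree with those of g in all degrees < sm (so g₀ has constant coefficient 1 and is a unit in ℂ⟦x⟧), and set q := δ(g₀) · g₀⁻¹. Then for every k ≥ s, q_[k] ≡ −u · ψ (mod x^m), where ψ is the k-th block of (Σ_{i<k} q_[i] x^{im}) · g₀. -/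
open PowerSeries

open Finset

lemma coeff_pow_zero {f : PowerSeries ℂ} (hf : PowerSeries.constantCoeff f = 0)
    {d n : ℕ} (h : d < n) : PowerSeries.coeff d (f ^ n) = 0 := by
  have hd : (X : ℂ⟦X⟧) ^ n ∣ f ^ n := pow_dvd_pow_of_dvd (X_dvd_iff.mpr hf) n
  exact X_pow_dvd_iff.mp hd d h

lemma antidiag_exp (N : ℕ) :
    ∑ ij ∈ Finset.HasAntidiagonal.antidiagonal N,
      ((ij.1.factorial : ℂ))⁻¹ * ((-1) ^ ij.2 * ((ij.2.factorial : ℂ))⁻¹) =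
      if N = 0 then 1 else 0 := by
  have h := congrArg (PowerSeries.coeff N) (PowerSeries.exp_mul_exp_neg_eq_one (A := ℂ))
  rw [coeff_mul, PowerSeries.coeff_one] at h
  rw [← h]
  refine Finset.sum_congr rfl fun ij _ => ?_
  have h1 : PowerSeries.coeff ij.1 (PowerSeries.exp ℂ) = ((ij.1.factorial : ℂ))⁻¹ := by
    rw [PowerSeries.coeff_exp, eq_ratCast]; push_cast; rw [one_div]
  have h2 : PowerSeries.coeff ij.2 (PowerSeries.evalNegHom (PowerSeries.exp ℂ)) =
      (-1) ^ ij.2 * ((ij.2.factorial : ℂ))⁻¹ := by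
    rw [PowerSeries.evalNegHom, PowerSeries.coeff_rescale, PowerSeries.coeff_exp, eq_ratCast]
    push_cast; rw [one_div]
  rw [h1, h2]

lemma expPS_coeff_partial {f : PowerSeries ℂ} (hf : PowerSeries.constantCoeff f = 0)
    {d D : ℕ} (h : d ≤ D) :
    PowerSeries.coeff d (expPS f) =
      ∑ n ∈ Finset.range (D + 1), ((n.factorial : ℂ))⁻¹ * PowerSeries.coeff d (f ^ n) := by
  rw [expPS, PowerSeries.coeff_mk]
  rw [Finset.sum_subset (Finset.range_subset_range.mpr (by omega) : range (d+1) ⊆ range (D+1))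
    (fun n _ hn => by
      rw [coeff_pow_zero hf (by simpa using hn), zero_div])]
  exact Finset.sum_congr rfl fun n _ => by rw [div_eq_inv_mul]

lemma expPS_mul_expPS_neg {f : PowerSeries ℂ} (hf : PowerSeries.constantCoeff f = 0) :
    expPS f * expPS (-f) = 1 := by
  have hnf : PowerSeries.constantCoeff (-f) = 0 := by rw [map_neg, hf, neg_zero]
  ext d
  have hneg : ∀ p i : ℕ, PowerSeries.coeff i ((-f) ^ p)
      = (-1 : ℂ) ^ p * PowerSeries.coeff i (f ^ p) := by
    intro p i
    have : (-f) ^ p = ((-1 : ℂ) ^ p) • (f ^ p) := by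
      rw [show -f = (-1 : ℂ) • f by rw [neg_smul, one_smul], smul_pow]
    rw [this, map_smul, smul_eq_mul]
  calc PowerSeries.coeff d (expPS f * expPS (-f))
      = ∑ ij ∈ Finset.HasAntidiagonal.antidiagonal d,
          (∑ n ∈ range (d+1), ((n.factorial : ℂ))⁻¹ * PowerSeries.coeff ij.1 (f ^ n)) *
          (∑ p ∈ range (d+1), ((-1 : ℂ) ^ p * ((p.factorial : ℂ))⁻¹) *
            PowerSeries.coeff ij.2 (f ^ p)) := by
        rw [PowerSeries.coeff_mul]
        refine Finset.sum_congr rfl fun ij hij => ?_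
        have h1 : ij.1 ≤ d := by have := Finset.HasAntidiagonal.mem_antidiagonal.mp hij; omega
        have h2 : ij.2 ≤ d := by have := Finset.HasAntidiagonal.mem_antidiagonal.mp hij; omega
        rw [expPS_coeff_partial hf h1, expPS_coeff_partial hnf h2]
        congr 1
        refine Finset.sum_congr rfl fun p _ => ?_
        rw [hneg]; ring
    _ = ∑ n ∈ range (d+1), ∑ p ∈ range (d+1),
          (((n.factorial : ℂ))⁻¹ * ((-1 : ℂ) ^ p * ((p.factorial : ℂ))⁻¹)) *
            PowerSeries.coeff d (f ^ (n + p)) := by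
        simp only [Finset.sum_mul_sum]
        rw [Finset.sum_comm]
        refine Finset.sum_congr rfl fun n _ => ?_
        rw [Finset.sum_comm]
        refine Finset.sum_congr rfl fun p _ => ?_
        rw [pow_add, PowerSeries.coeff_mul, Finset.mul_sum]
        refine Finset.sum_congr rfl fun ij _ => ?_
        ring
    _ = ∑ N ∈ range (d+1), (∑ ij ∈ Finset.HasAntidiagonal.antidiagonal N,
          ((ij.1.factorial : ℂ))⁻¹ * ((-1 : ℂ) ^ ij.2 * ((ij.2.factorial : ℂ))⁻¹)) *
          PowerSeries.coeff d (f ^ N) := by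
        have step : ∀ n ∈ range (d+1), ∀ p ∈ range (d+1),
            (((n.factorial : ℂ))⁻¹ * ((-1 : ℂ) ^ p * ((p.factorial : ℂ))⁻¹)) *
              PowerSeries.coeff d (f ^ (n + p)) =
            ∑ N ∈ range (d+1), (if n + p = N then
              (((n.factorial : ℂ))⁻¹ * ((-1 : ℂ) ^ p * ((p.factorial : ℂ))⁻¹)) *
                PowerSeries.coeff d (f ^ N) else 0) := by
          intro n _ p _
          rw [Finset.sum_ite_eq]
          split_ifs with h
          · rfl
          · rw [coeff_pow_zero hf (by simp at h; omega), mul_zero]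
        rw [Finset.sum_congr rfl fun n hn => Finset.sum_congr rfl fun p hp => step n hn p hp]
        rw [Finset.sum_congr rfl fun n _ => Finset.sum_comm, Finset.sum_comm]
        refine Finset.sum_congr rfl fun N hN => ?_
        rw [Finset.sum_mul]
        rw [← Finset.sum_product']
        rw [← Finset.sum_filter]
        refine Finset.sum_congr ?_ fun ij _ => rfl
        ext ij
        simp only [Finset.mem_filter, Finset.mem_product, Finset.mem_range,
          Finset.HasAntidiagonal.mem_antidiagonal]
        have hNd : N ≤ d := by have := Finset.mem_range.mp hN; omega
        omega
    _ = PowerSeries.coeff d 1 := by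
        rw [Finset.sum_congr rfl fun N _ => by rw [antidiag_exp N]]
        simp only [ite_mul, one_mul, zero_mul]
        rw [Finset.sum_ite_eq' (range (d+1)) 0 (fun N => PowerSeries.coeff d (f ^ N))]
        rw [if_pos (by simp), pow_zero]

lemma expPS_constantCoeff (f : PowerSeries ℂ) :
    PowerSeries.constantCoeff (expPS f) = 1 := by
  rw [← PowerSeries.coeff_zero_eq_constantCoeff_apply, expPS, PowerSeries.coeff_mk]
  simp

lemma block_unique {m i c n : ℕ} (h1 : i * m ≤ n) (h2 : n < i * m + m)
    (h3 : c * m ≤ n) (h4 : n < c * m + m) : i = c := by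
  rcases lt_trichotomy i c with h | h | h
  · exfalso
    have hh : (i + 1) * m ≤ c * m := Nat.mul_le_mul_right m h
    rw [add_mul, one_mul] at hh
    omega
  · exact h
  · exfalso
    have hh : (c + 1) * m ≤ i * m := Nat.mul_le_mul_right m h
    rw [add_mul, one_mul] at hh
    omega

/-- Correctness of one iteration of the division loop: with `g = exp(f)`,
`u = exp(−f)`, `g₀` the truncation of `g` to degree `< sm`, and
`q = δ(g₀) · g₀⁻¹`, for every `k ≥ s` we have `q_[k] ≡ −u·ψ (mod x^m)`, where
`ψ` is the `k`-th block of `(Σ_{i<k} q_[i] x^{im}) · g₀`. -/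
theorem division_loop_correct (f : PowerSeries ℂ)
    (hf : PowerSeries.constantCoeff f = 0)
    (g u : PowerSeries ℂ) (hg : g = expPS f) (hu : u = expPS (-f))
    (s m : ℕ) (hs : 1 ≤ s) (hm : 1 ≤ m)
    (g₀ : Polynomial ℂ) (hg₀ : g₀ = PowerSeries.trunc (s * m) g)
    (q : PowerSeries ℂ) (hq : q = delta (g₀ : PowerSeries ℂ) * ((g₀ : PowerSeries ℂ))⁻¹)
    (k : ℕ) (hk : s ≤ k)
    (ψ : PowerSeries ℂ)
    (hψ : ψ = blk m k ((∑ i ∈ Finset.range k, blk m i q * PowerSeries.X ^ (i * m)) *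
      (g₀ : PowerSeries ℂ))) :
    modX m (blk m k q) (-(u * ψ)) := by
  set Q : PowerSeries ℂ := ∑ i ∈ Finset.range k, blk m i q * PowerSeries.X ^ (i * m) with hQdef
  -- coefficients of g₀
  have hcoe : ∀ n, PowerSeries.coeff n (g₀ : PowerSeries ℂ) =
      if n < s * m then PowerSeries.coeff n g else 0 := by
    intro n
    rw [Polynomial.coeff_coe, hg₀, PowerSeries.coeff_trunc]
  have hsm : 1 ≤ s * m := Nat.one_le_iff_ne_zero.mpr (by positivity)
  have hg1 : PowerSeries.constantCoeff (g₀ : PowerSeries ℂ) = 1 := by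
    rw [← PowerSeries.coeff_zero_eq_constantCoeff_apply, hcoe, if_pos (by omega), hg,
      PowerSeries.coeff_zero_eq_constantCoeff_apply, expPS_constantCoeff]
  -- q * g₀ = delta g₀
  have hqg : q * (g₀ : PowerSeries ℂ) = delta (g₀ : PowerSeries ℂ) := by
    rw [hq, mul_assoc, PowerSeries.inv_mul_cancel _ (by rw [hg1]; exact one_ne_zero), mul_one]
  have hkm : s * m ≤ k * m := Nat.mul_le_mul_right m hk
  -- delta g₀ vanishes in degrees ≥ s*m
  have hdz : ∀ n, s * m ≤ n → PowerSeries.coeff n (delta (g₀ : PowerSeries ℂ)) = 0 := by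
    intro n hn
    have h1 : n = (n - 1) + 1 := by omega
    rw [delta, h1, PowerSeries.coeff_succ_X_mul]
    change PowerSeries.coeff (n - 1) (PowerSeries.derivative ℂ (g₀ : PowerSeries ℂ)) = 0
    rw [PowerSeries.coeff_derivative]
    rw [show n - 1 + 1 = n from (by omega), hcoe, if_neg (by omega), zero_mul]
  -- coefficients of Q
  have termEq : ∀ i n, PowerSeries.coeff n (blk m i q * PowerSeries.X ^ (i * m)) =
      if i * m ≤ n ∧ n - i * m < m then PowerSeries.coeff n q else 0 := by
    intro i n
    rw [PowerSeries.coeff_mul_X_pow']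
    rcases le_or_gt (i * m) n with h | h
    · rw [if_pos h, blk, PowerSeries.coeff_mk]
      by_cases h2 : n - i * m < m
      · rw [if_pos h2, if_pos ⟨h, h2⟩, Nat.add_sub_cancel' h]
      · rw [if_neg h2, if_neg (by tauto)]
    · rw [if_neg (not_le.mpr h), if_neg (by omega)]
  have hQ : ∀ n, PowerSeries.coeff n Q =
      if n < k * m then PowerSeries.coeff n q else 0 := by
    intro n
    rw [hQdef, map_sum]
    rcases lt_or_ge n (k * m) with hn | hn
    · have hdm := Nat.div_add_mod n m
      have hmod : n % m < m := Nat.mod_lt n (by omega)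
      set c := n / m with hcdef
      have hc1 : c * m ≤ n := by rw [mul_comm]; exact Nat.le.intro hdm
      have hc2 : n < c * m + m := by rw [mul_comm]; omega
      have hck : c < k := Nat.lt_of_mul_lt_mul_right (lt_of_le_of_lt hc1 hn)
      rw [if_pos hn, Finset.sum_eq_single_of_mem c (Finset.mem_range.mpr hck)]
      · rw [termEq, if_pos ⟨hc1, by omega⟩]
      · intro i _ hic
        rw [termEq, if_neg]
        rintro ⟨h1, h2⟩
        exact hic (block_unique h1 (by omega) hc1 hc2)
    · rw [if_neg (by omega)]
      refine Finset.sum_eq_zero fun i hi => ?_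
      have hik : (i + 1) * m ≤ k * m := Nat.mul_le_mul_right m (Finset.mem_range.mp hi)
      rw [add_mul, one_mul] at hik
      rw [termEq, if_neg (by omega)]
  -- Step A :  coeff j ψ = - coeff j (blk m k q * g₀)
  have stepA : modX m ψ (-(blk m k q * (g₀ : PowerSeries ℂ))) := by
    intro j hj
    have e1 : PowerSeries.coeff j ψ =
        PowerSeries.coeff (k * m + j) (Q * (g₀ : PowerSeries ℂ)) := by
      rw [hψ, blk, PowerSeries.coeff_mk, if_pos hj]
    have e2 : Q * (g₀ : PowerSeries ℂ) =
        q * (g₀ : PowerSeries ℂ) - (q - Q) * (g₀ : PowerSeries ℂ) := by ring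
    have e3 : PowerSeries.coeff (k * m + j) ((q - Q) * (g₀ : PowerSeries ℂ)) =
        PowerSeries.coeff j (blk m k q * (g₀ : PowerSeries ℂ)) := by
      rw [PowerSeries.coeff_mul, Finset.Nat.sum_antidiagonal_eq_sum_range_succ_mk,
          PowerSeries.coeff_mul, Finset.Nat.sum_antidiagonal_eq_sum_range_succ_mk]
      have hsplit : k * m + j + 1 = k * m + (j + 1) := by omega
      simp only [Nat.succ_eq_add_one]
      have hzero : ∑ i ∈ Finset.Ico 0 (k * m),
          PowerSeries.coeff i (q - Q) *
            PowerSeries.coeff (k * m + j - i) (g₀ : PowerSeries ℂ) = 0 := by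
        refine Finset.sum_eq_zero fun i hi => ?_
        have him : i < k * m := (Finset.mem_Ico.mp hi).2
        rw [map_sub, hQ, if_pos him, sub_self, zero_mul]
      rw [hsplit, Finset.range_eq_Ico,
        ← Finset.sum_Ico_consecutive _ (Nat.zero_le (k * m)) (by omega : k * m ≤ k * m + (j + 1))]
      rw [hzero, zero_add, Finset.sum_Ico_eq_sum_range]
      rw [show k * m + (j + 1) - k * m = j + 1 from (by omega)]
      refine Finset.sum_congr rfl fun t ht => ?_
      have htj : t ≤ j := by have := Finset.mem_range.mp ht; omega
      rw [map_sub, hQ, if_neg (by omega), sub_zero]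
      rw [show k * m + j - (k * m + t) = j - t from (by omega)]
      rw [blk, PowerSeries.coeff_mk, if_pos (by omega)]
    rw [e1, e2, map_sub, hqg, hdz _ (by omega), zero_sub, e3, map_neg]
  -- Step B : u * g₀ ≡ 1 mod x^m
  have stepB : modX m (u * (g₀ : PowerSeries ℂ)) 1 := by
    intro j hj
    have e1 : PowerSeries.coeff j (u * (g₀ : PowerSeries ℂ)) =
        PowerSeries.coeff j (u * g) := by
      rw [PowerSeries.coeff_mul, PowerSeries.coeff_mul]
      refine Finset.sum_congr rfl fun ij hij => ?_
      have hij2 : ij.2 ≤ j := by have := Finset.HasAntidiagonal.mem_antidiagonal.mp hij; omega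
      have : ij.2 < s * m := by
        have : m ≤ s * m := Nat.le_mul_of_pos_left m (by omega)
        omega
      rw [hcoe, if_pos this]
    rw [e1, hu, hg, mul_comm, expPS_mul_expPS_neg hf]
  -- assemble
  intro j hj
  have hA := stepA j hj
  have h1 : PowerSeries.coeff j (-(u * ψ)) =
      PowerSeries.coeff j (u * (blk m k q * (g₀ : PowerSeries ℂ))) := by
    rw [map_neg, PowerSeries.coeff_mul, PowerSeries.coeff_mul]
    rw [neg_eq_iff_eq_neg, ← Finset.sum_neg_distrib]
    refine Finset.sum_congr rfl fun ij hij => ?_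
    have hij2 : ij.2 ≤ j := by have := Finset.HasAntidiagonal.mem_antidiagonal.mp hij; omega
    rw [stepA ij.2 (by omega)]
    rw [map_neg]
    ring
  have h2 : PowerSeries.coeff j (u * (blk m k q * (g₀ : PowerSeries ℂ))) =
      PowerSeries.coeff j (blk m k q) := by
    have e : u * (blk m k q * (g₀ : PowerSeries ℂ)) =
        (u * (g₀ : PowerSeries ℂ)) * blk m k q := by ring
    rw [e, PowerSeries.coeff_mul]
    have : ∀ ij ∈ Finset.HasAntidiagonal.antidiagonal j,
        PowerSeries.coeff ij.1 (u * (g₀ : PowerSeries ℂ)) *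
          PowerSeries.coeff ij.2 (blk m k q) =
        PowerSeries.coeff ij.1 (1 : PowerSeries ℂ) *
          PowerSeries.coeff ij.2 (blk m k q) := by
      intro ij hij
      have hij1 : ij.1 ≤ j := by have := Finset.HasAntidiagonal.mem_antidiagonal.mp hij; omega
      rw [stepB ij.1 (by omega)]
    rw [Finset.sum_congr rfl this, ← PowerSeries.coeff_mul, one_mul]
  rw [h1, h2]
end
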